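/- Let Φ: ℝ → [0,1] be non-increasing with Φ(t) = 1 for t sufficiently small and Φ(t) = 0 for t > M (some finite M), and let K(u) = log(u ∫_{−∞}^{∞} e^{ut} Φ(t) dt) for u > 0. Suppose that for parameters s > 0, V ∈ ℝ, Δ > 0 with sΔ = o of the main term, the two tail bounds ∫_{V+Δ}^∞ e^{st}Φ(t)dt ≤ ε ∫_{−∞}^∞ e^{st}Φ(t)dt and ∫_{−∞}^{V−Δ} e^{st}Φ(t)dt ≤ ε ∫_{−∞}^∞ e^{st}Φ(t)dt hold with ε ≤ 1/4. Then e^{sV + O(sΔ)} Φ(V+Δ) ≤ ∫_{V−Δ}^{V+Δ} e^{st}Φ(t)dt ≤ e^{sV + O(sΔ)} Φ(V−Δ), and consequently Φ(V+Δ) ≤ e^{−sV + K(s) + O(sΔ)} ≤ Φ(V−Δ) up to the stated multiplicative factors. -/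

import Mathlib

open Real MeasureTheory

/-- The saddle point sandwich: for a non-increasing `Φ : ℝ → [0,1]` which is `1`
near `-∞` and `0` beyond `M`, with tail bounds at the saddle point `s`, the central integral
`∫_{V-Δ}^{V+Δ} e^{st}Φ(t)dt` is squeezed between `e^{sV+O(sΔ)}Φ(V±Δ)`, and consequently
`Φ(V+Δ) ≤ e^{-sV+K(s)+O(sΔ)} ≤ Φ(V-Δ)` up to the stated multiplicative factors, where
`K(u) = log(u ∫ e^{ut}Φ(t)dt)`. -/
theorem stmt_13 (Φ : ℝ → ℝ) (hanti : Antitone Φ) (h01 : ∀ t, Φ t ∈ Set.Icc (0 : ℝ) 1)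
    (t₀ : ℝ) (hone : ∀ t ≤ t₀, Φ t = 1) (M : ℝ) (hzero : ∀ t > M, Φ t = 0)
    (s V Δ ε : ℝ) (hs : 0 < s) (hΔ : 0 < Δ) (hε : 0 < ε) (hε4 : ε ≤ 1 / 4)
    (htail₁ : (∫ t in Set.Ioi (V + Δ), Real.exp (s * t) * Φ t)
      ≤ ε * ∫ t, Real.exp (s * t) * Φ t)
    (htail₂ : (∫ t in Set.Iio (V - Δ), Real.exp (s * t) * Φ t)
      ≤ ε * ∫ t, Real.exp (s * t) * Φ t) :
    (Real.exp (s * V - s * Δ) * (2 * Δ) * Φ (V + Δ)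
        ≤ ∫ t in (V - Δ)..(V + Δ), Real.exp (s * t) * Φ t) ∧
    ((∫ t in (V - Δ)..(V + Δ), Real.exp (s * t) * Φ t)
        ≤ Real.exp (s * V + s * Δ) * (2 * Δ) * Φ (V - Δ)) ∧
    (Φ (V + Δ)
        ≤ Real.exp (Real.log (s * ∫ t, Real.exp (s * t) * Φ t) - s * V + s * Δ)
          / (2 * s * Δ)) ∧
    (Real.exp (Real.log (s * ∫ t, Real.exp (s * t) * Φ t) - s * V - s * Δ) / (4 * s * Δ)
        ≤ Φ (V - Δ)) := by
  set f : ℝ → ℝ := fun t => Real.exp (s * t) * Φ t with hf_def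
  have hΦ_meas : Measurable Φ := hanti.measurable
  have hf_meas : Measurable f :=
    (Real.measurable_exp.comp (measurable_const.mul measurable_id)).mul hΦ_meas
  have hf_nonneg : ∀ t, 0 ≤ f t := fun t => mul_nonneg (Real.exp_pos _).le (h01 t).1
  -- integrability of f
  have hG : Integrable (Set.indicator (Set.Iic (s * M)) Real.exp) :=
    (integrable_indicator_iff measurableSet_Iic).2
      ((integrableOn_exp_Iic (s * M)))
  have hG2 : Integrable (fun x => Set.indicator (Set.Iic (s * M)) Real.exp (s * x)) :=
    hG.comp_mul_left' hs.ne'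
  have hf_int : Integrable f := by
    refine hG2.mono' hf_meas.aestronglyMeasurable (Filter.Eventually.of_forall fun x => ?_)
    rw [Real.norm_eq_abs, abs_of_nonneg (hf_nonneg x)]
    by_cases hx : x ≤ M
    · have : s * x ∈ Set.Iic (s * M) := mul_le_mul_of_nonneg_left hx hs.le
      rw [Set.indicator_of_mem this]
      calc f x ≤ Real.exp (s * x) * 1 :=
            mul_le_mul_of_nonneg_left (h01 x).2 (Real.exp_pos _).le
        _ = Real.exp (s * x) := mul_one _
    · have hx' : M < x := lt_of_not_ge hx
      have : f x = 0 := by simp [hf_def, hzero x hx']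
      rw [this]
      exact Set.indicator_nonneg (fun y _ => (Real.exp_pos y).le) _
  set I : ℝ := ∫ t, f t with hI_def
  have hI_nonneg : 0 ≤ I := integral_nonneg hf_nonneg
  -- positivity of I
  have hI_pos : 0 < I := by
    have hsub : Set.Ioc (t₀ - 1) t₀ ⊆ Set.univ := Set.subset_univ _
    have hlow : Real.exp (s * (t₀ - 1)) * (volume (Set.Ioc (t₀ - 1) t₀)).toReal
        ≤ ∫ t in Set.Ioc (t₀ - 1) t₀, f t := by
      refine setIntegral_ge_of_const_le_real measurableSet_Ioc ?_ (fun x hx => ?_)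
        (hf_int.integrableOn)
      · simp [Real.volume_Ioc]
      · have h1 : Φ x = 1 := hone x hx.2
        have h2 : Real.exp (s * (t₀ - 1)) ≤ Real.exp (s * x) :=
          Real.exp_le_exp.2 (mul_le_mul_of_nonneg_left (by linarith [hx.1]) hs.le)
        simpa [hf_def, h1] using h2
    have hvol : (volume (Set.Ioc (t₀ - 1) t₀)).toReal = 1 := by
      simp [Real.volume_Ioc]
    rw [hvol, mul_one] at hlow
    have := setIntegral_le_integral hf_int (Filter.Eventually.of_forall hf_nonneg)
      (s := Set.Ioc (t₀ - 1) t₀)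
    calc (0:ℝ) < Real.exp (s * (t₀ - 1)) := Real.exp_pos _
      _ ≤ ∫ t in Set.Ioc (t₀ - 1) t₀, f t := hlow
      _ ≤ I := this
  have hab : V - Δ ≤ V + Δ := by linarith
  have hii : IntervalIntegrable f volume (V - Δ) (V + Δ) := hf_int.intervalIntegrable
  -- part 1
  have part1 : Real.exp (s * V - s * Δ) * (2 * Δ) * Φ (V + Δ)
      ≤ ∫ t in (V - Δ)..(V + Δ), f t := by
    have hc : IntervalIntegrable (fun _ : ℝ => Real.exp (s * V - s * Δ) * Φ (V + Δ))
        volume (V - Δ) (V + Δ) := intervalIntegrable_const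
    have := intervalIntegral.integral_mono_on (μ := volume) hab hc hii (fun x hx => by
      have h1 : Real.exp (s * V - s * Δ) ≤ Real.exp (s * x) := by
        apply Real.exp_le_exp.2
        have := hx.1
        nlinarith [hx.1]
      have h2 : Φ (V + Δ) ≤ Φ x := hanti hx.2
      exact mul_le_mul h1 h2 (h01 (V + Δ)).1 (Real.exp_pos _).le)
    simpa [mul_comm, mul_assoc, mul_left_comm, show V + Δ - (V - Δ) = 2 * Δ by ring,
      smul_eq_mul] using this
  -- part 2
  have part2 : (∫ t in (V - Δ)..(V + Δ), f t)
      ≤ Real.exp (s * V + s * Δ) * (2 * Δ) * Φ (V - Δ) := by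
    have hc : IntervalIntegrable (fun _ : ℝ => Real.exp (s * V + s * Δ) * Φ (V - Δ))
        volume (V - Δ) (V + Δ) := intervalIntegrable_const
    have := intervalIntegral.integral_mono_on (μ := volume) hab hii hc (fun x hx => by
      have h1 : Real.exp (s * x) ≤ Real.exp (s * V + s * Δ) := by
        apply Real.exp_le_exp.2
        nlinarith [hx.2]
      have h2 : Φ x ≤ Φ (V - Δ) := hanti hx.1
      exact mul_le_mul h1 h2 (h01 x).1 (Real.exp_pos _).le)
    simpa [mul_comm, mul_assoc, mul_left_comm, show V + Δ - (V - Δ) = 2 * Δ by ring,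
      smul_eq_mul] using this
  set C : ℝ := ∫ t in (V - Δ)..(V + Δ), f t with hC_def
  have hC_eq : C = ∫ t in Set.Ioc (V - Δ) (V + Δ), f t := intervalIntegral.integral_of_le hab
  have hC_le_I : C ≤ I := by
    rw [hC_eq]
    exact setIntegral_le_integral hf_int (Filter.Eventually.of_forall hf_nonneg)
  -- decomposition: I = Iio + Icc + Ioi
  have hdecomp : (∫ t in Set.Iio (V - Δ), f t) + C + (∫ t in Set.Ioi (V + Δ), f t) = I := by
    have h1 : (∫ t in Set.Iic (V + Δ), f t) + (∫ t in Set.Ioi (V + Δ), f t) = I :=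
      intervalIntegral.integral_Iic_add_Ioi hf_int.integrableOn hf_int.integrableOn
    have h2 : (∫ t in Set.Iio (V - Δ), f t) + (∫ t in Set.Icc (V - Δ) (V + Δ), f t)
        = ∫ t in Set.Iic (V + Δ), f t := by
      rw [← setIntegral_union ((Set.Iio_disjoint_Ici le_rfl).mono_right Set.Icc_subset_Ici_self) measurableSet_Icc
        hf_int.integrableOn hf_int.integrableOn, Set.Iio_union_Icc_eq_Iic hab]
    have h3 : (∫ t in Set.Icc (V - Δ) (V + Δ), f t) = C := by
      rw [hC_eq]; exact integral_Icc_eq_integral_Ioc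
    linarith
  have hC_ge : I / 2 ≤ C := by
    have h1 := htail₁
    have h2 := htail₂
    nlinarith [hdecomp, hI_pos]
  have hexp_log : Real.exp (Real.log (s * I)) = s * I :=
    Real.exp_log (mul_pos hs hI_pos)
  refine ⟨part1, part2, ?_, ?_⟩
  · -- part 3
    have key : Real.exp (s * V - s * Δ) * (2 * Δ) * Φ (V + Δ) ≤ I := part1.trans hC_le_I
    rw [le_div_iff₀ (by positivity)]
    have hrw : Real.exp (Real.log (s * I) - s * V + s * Δ)
        = s * I * Real.exp (s * Δ - s * V) := by
      rw [show Real.log (s * I) - s * V + s * Δ = Real.log (s * I) + (s * Δ - s * V) by ring,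
        Real.exp_add, hexp_log]
    rw [hrw]
    have k1 := mul_le_mul_of_nonneg_right key (Real.exp_pos (s * Δ - s * V)).le
    have k3 : Real.exp (s * V - s * Δ) * (2 * Δ) * Φ (V + Δ) * Real.exp (s * Δ - s * V)
        = 2 * Δ * Φ (V + Δ) := by
      have h : Real.exp (s * V - s * Δ) * Real.exp (s * Δ - s * V) = 1 := by
        rw [← Real.exp_add, show s * V - s * Δ + (s * Δ - s * V) = 0 by ring, Real.exp_zero]
      calc Real.exp (s * V - s * Δ) * (2 * Δ) * Φ (V + Δ) * Real.exp (s * Δ - s * V)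
          = Real.exp (s * V - s * Δ) * Real.exp (s * Δ - s * V) * (2 * Δ * Φ (V + Δ)) := by ring
        _ = 2 * Δ * Φ (V + Δ) := by rw [h, one_mul]
    rw [k3] at k1
    have k4 := mul_le_mul_of_nonneg_left k1 hs.le
    nlinarith [k4]
  · -- part 4
    have key : I / 2 ≤ Real.exp (s * V + s * Δ) * (2 * Δ) * Φ (V - Δ) :=
      (hC_ge.trans part2)
    rw [div_le_iff₀ (by positivity)]
    have hrw : Real.exp (Real.log (s * I) - s * V - s * Δ)
        = s * I * Real.exp (-(s * V + s * Δ)) := by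
      rw [show Real.log (s * I) - s * V - s * Δ = Real.log (s * I) + (-(s * V + s * Δ)) by ring,
        Real.exp_add, hexp_log]
    rw [hrw]
    have k1 := mul_le_mul_of_nonneg_right key (Real.exp_pos (-(s * V + s * Δ))).le
    have k3 : Real.exp (s * V + s * Δ) * (2 * Δ) * Φ (V - Δ) * Real.exp (-(s * V + s * Δ))
        = 2 * Δ * Φ (V - Δ) := by
      have h : Real.exp (s * V + s * Δ) * Real.exp (-(s * V + s * Δ)) = 1 := by
        rw [← Real.exp_add, show s * V + s * Δ + -(s * V + s * Δ) = 0 by ring, Real.exp_zero]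
      calc Real.exp (s * V + s * Δ) * (2 * Δ) * Φ (V - Δ) * Real.exp (-(s * V + s * Δ))
          = Real.exp (s * V + s * Δ) * Real.exp (-(s * V + s * Δ)) * (2 * Δ * Φ (V - Δ)) := by
            ring
        _ = 2 * Δ * Φ (V - Δ) := by rw [h, one_mul]
    rw [k3] at k1
    have k4 := mul_le_mul_of_nonneg_left k1 (by positivity : (0:ℝ) ≤ 2 * s)
    nlinarith [k4]
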